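/- (Farkas' lemma, certificate existence) Let P = {x ∈ Q^n | A·x ≤ b} be a nonempty polyhedron and C = (c·x ≤ d) a constraint such that P ⊑ C. Then there exists a row vector λ ≥ 0 such that λ·A = c and λ·b ≤ d. -/

import Mathlib

open Matrix

lemma cone_sep (n : ℕ) : ∀ (m : ℕ) (a : Fin m → (Fin n → ℚ)) (c : Fin n → ℚ),
    (¬ ∃ lam : Fin m → ℚ, (∀ i, 0 ≤ lam i) ∧ ∑ i, lam i • a i = c) →
    ∃ x : Fin n → ℚ, (∀ i, a i ⬝ᵥ x ≤ 0) ∧ 0 < c ⬝ᵥ x := by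
  intro m
  induction m with
  | zero =>
    intro a c h
    refine ⟨c, fun i => i.elim0, ?_⟩
    have hc : c ≠ 0 := by
      intro hc
      exact h ⟨0, fun i => le_refl 0, by simp [hc]⟩
    have h0 : 0 ≤ c ⬝ᵥ c := Finset.sum_nonneg fun i _ => mul_self_nonneg _
    rcases h0.lt_or_eq with h1 | h1
    · exact h1
    · exact absurd (dotProduct_self_eq_zero.mp h1.symm) hc
  | succ m ih =>
    intro a c h
    set a' : Fin m → (Fin n → ℚ) := fun i => a i.castSucc with ha'
    set aL : Fin n → ℚ := a (Fin.last m) with haL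
    have h' : ¬ ∃ lam : Fin m → ℚ, (∀ i, 0 ≤ lam i) ∧ ∑ i, lam i • a' i = c := by
      rintro ⟨lam, hlam, hsum⟩
      refine h ⟨Fin.snoc lam 0, ?_, ?_⟩
      · intro i
        refine Fin.lastCases ?_ ?_ i <;> simp [hlam]
      · rw [Fin.sum_univ_castSucc]
        simpa [ha'] using hsum
    obtain ⟨x, hx, hcx⟩ := ih a' c h'
    by_cases hLx : aL ⬝ᵥ x ≤ 0
    · refine ⟨x, ?_, hcx⟩
      intro i
      refine Fin.lastCases ?_ ?_ i
      · exact hLx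
      · exact hx
    push_neg at hLx
    set t : ℚ := aL ⬝ᵥ x with ht
    set bb : Fin m → (Fin n → ℚ) := fun i => a' i - ((a' i ⬝ᵥ x) / t) • aL with hbb
    set c' : Fin n → ℚ := c - ((c ⬝ᵥ x) / t) • aL with hc'
    have hbsep : ¬ ∃ nu : Fin m → ℚ, (∀ i, 0 ≤ nu i) ∧ ∑ i, nu i • bb i = c' := by
      rintro ⟨nu, hnu, hsum⟩
      set μ : ℚ := (c ⬝ᵥ x) / t - ∑ i, nu i * ((a' i ⬝ᵥ x) / t) with hμ
      refine h ⟨Fin.snoc nu μ, ?_, ?_⟩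
      · intro i
        refine Fin.lastCases ?_ ?_ i
        · simp only [Fin.snoc_last]
          have h1 : 0 < (c ⬝ᵥ x) / t := div_pos hcx hLx
          have h2 : ∑ i, nu i * ((a' i ⬝ᵥ x) / t) ≤ 0 := by
            apply Finset.sum_nonpos
            intro i _
            exact mul_nonpos_of_nonneg_of_nonpos (hnu i) (div_nonpos_of_nonpos_of_nonneg (hx i) hLx.le)
          rw [hμ]; linarith
        · intro i; simp [hnu i]
      · rw [Fin.sum_univ_castSucc]
        simp only [Fin.snoc_castSucc, Fin.snoc_last]
        have : ∑ i, nu i • a i.castSucc = ∑ i, nu i • bb i + ∑ i, (nu i * ((a' i ⬝ᵥ x) / t)) • aL := by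
          rw [← Finset.sum_add_distrib]
          congr 1; funext i
          rw [hbb]; simp only [smul_sub, smul_smul]; abel
        rw [this, hsum, hc', hμ, sub_smul, Finset.sum_smul]
        abel
    obtain ⟨y, hy, hcy⟩ := ih bb c' hbsep
    set z : Fin n → ℚ := y - ((aL ⬝ᵥ y) / t) • x with hz
    have hdot : ∀ v : Fin n → ℚ, v ⬝ᵥ z = v ⬝ᵥ y - ((aL ⬝ᵥ y) / t) * (v ⬝ᵥ x) := by
      intro v
      rw [hz, dotProduct_sub, dotProduct_smul, smul_eq_mul]
    refine ⟨z, ?_, ?_⟩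
    · intro i
      refine Fin.lastCases ?_ ?_ i
      · rw [hdot]
        rw [ht]; field_simp
        rw [← haL, mul_div_assoc, div_self (ne_of_gt hLx)]; simp
      · intro i
        have hb := hy i
        rw [hbb] at hb
        simp only [sub_dotProduct, smul_dotProduct, smul_eq_mul] at hb
        rw [hdot]
        have : a' i ⬝ᵥ y - aL ⬝ᵥ y / t * (a' i ⬝ᵥ x) = a' i ⬝ᵥ y - a' i ⬝ᵥ x / t * (aL ⬝ᵥ y) := by ring
        rw [this]
        exact hb
    · rw [hdot]
      have hb := hcy
      rw [hc'] at hb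
      simp only [sub_dotProduct, smul_dotProduct, smul_eq_mul] at hb
      have : c ⬝ᵥ y - aL ⬝ᵥ y / t * (c ⬝ᵥ x) = c ⬝ᵥ y - c ⬝ᵥ x / t * (aL ⬝ᵥ y) := by ring
      rw [this]
      exact hb
lemma farkas_cone (n m : ℕ) (a : Fin m → (Fin n → ℚ)) (c : Fin n → ℚ)
    (h : ∀ x : Fin n → ℚ, (∀ i, a i ⬝ᵥ x ≤ 0) → c ⬝ᵥ x ≤ 0) :
    ∃ lam : Fin m → ℚ, (∀ i, 0 ≤ lam i) ∧ ∑ i, lam i • a i = c := by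
  by_contra hcon
  obtain ⟨x, hx, hcx⟩ := cone_sep n m a c hcon
  exact absurd (h x hx) (not_le.mpr hcx)

lemma snoc_dot (n : ℕ) (u : Fin n → ℚ) (s : ℚ) (z : Fin (n+1) → ℚ) :
    (Fin.snoc u s : Fin (n+1) → ℚ) ⬝ᵥ z = u ⬝ᵥ (Fin.init z) + s * z (Fin.last n) := by
  rw [dotProduct, Fin.sum_univ_castSucc]
  simp [Fin.init, dotProduct]

theorem farkas_certificate_exists (n m : ℕ)
    (A : Matrix (Fin m) (Fin n) ℚ) (b : Fin m → ℚ) (c : Fin n → ℚ) (d : ℚ)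
    (hne : ∃ x : Fin n → ℚ, A.mulVec x ≤ b)
    (hincl : ∀ x : Fin n → ℚ, A.mulVec x ≤ b → c ⬝ᵥ x ≤ d) :
    ∃ lam : Fin m → ℚ, (∀ i, 0 ≤ lam i) ∧ A.vecMul lam = c ∧ lam ⬝ᵥ b ≤ d := by
  set g : Fin (m+1) → (Fin (n+1) → ℚ) :=
    Fin.snoc (fun i => Fin.snoc (A i) (-(b i))) (Fin.snoc 0 (-1)) with hg
  set C : Fin (n+1) → ℚ := Fin.snoc c (-d) with hC
  have hsep : ∀ z : Fin (n+1) → ℚ, (∀ i, g i ⬝ᵥ z ≤ 0) → C ⬝ᵥ z ≤ 0 := by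
    intro z hz
    set x : Fin n → ℚ := Fin.init z with hx
    set t : ℚ := z (Fin.last n) with htd
    have ht : 0 ≤ t := by
      have := hz (Fin.last m)
      rw [hg] at this
      simp only [Fin.snoc_last] at this
      rw [snoc_dot] at this
      simpa using this
    have hrow : ∀ i : Fin m, A i ⬝ᵥ x ≤ b i * t := by
      intro i
      have := hz i.castSucc
      rw [hg] at this
      simp only [Fin.snoc_castSucc] at this
      rw [snoc_dot] at this
      linarith
    rw [hC, snoc_dot]
    rcases ht.lt_or_eq with htpos | ht0
    · have hfeas : A.mulVec (t⁻¹ • x) ≤ b := by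
        intro i
        rw [mulVec_smul]
        have : A.mulVec x i = A i ⬝ᵥ x := rfl
        simp only [Pi.smul_apply, this, smul_eq_mul]
        rw [inv_mul_le_iff₀ htpos]
        linarith [hrow i]
      have := hincl _ hfeas
      rw [dotProduct_smul, smul_eq_mul, inv_mul_le_iff₀ htpos] at this
      linarith
    · rw [← htd, ← ht0, mul_zero, add_zero]
      by_contra hpos
      push_neg at hpos
      obtain ⟨x0, hx0⟩ := hne
      set s : ℚ := max 0 ((d - c ⬝ᵥ x0) / (c ⬝ᵥ x)) + 1 with hs
      have hs0 : 0 ≤ s := by positivity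
      have hfeas : A.mulVec (x0 + s • x) ≤ b := by
        intro i
        rw [mulVec_add, mulVec_smul]
        have h1 : A.mulVec x i = A i ⬝ᵥ x := rfl
        have h2 : A i ⬝ᵥ x ≤ 0 := by rw [← ht0] at hrow; simpa using hrow i
        simp only [Pi.add_apply, Pi.smul_apply, h1, smul_eq_mul]
        have := hx0 i
        nlinarith
      have hle := hincl _ hfeas
      rw [dotProduct_add, dotProduct_smul, smul_eq_mul] at hle
      have hsgt : (d - c ⬝ᵥ x0) / (c ⬝ᵥ x) < s := by
        rw [hs]; have := le_max_right 0 ((d - c ⬝ᵥ x0) / (c ⬝ᵥ x)); linarith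
      rw [div_lt_iff₀ hpos] at hsgt
      linarith
  obtain ⟨lam', hlam', hsum⟩ := farkas_cone (n+1) (m+1) g C hsep
  refine ⟨fun i => lam' i.castSucc, fun i => hlam' i.castSucc, ?_, ?_⟩
  · funext j
    have := congrFun hsum (j.castSucc)
    rw [Fin.sum_univ_castSucc] at this
    simp only [hg, hC, Fin.snoc_castSucc, Fin.snoc_last, Finset.sum_apply, Pi.add_apply,
      Pi.smul_apply, smul_eq_mul] at this
    simp only [Pi.zero_apply, mul_zero, add_zero] at this
    simpa [vecMul, dotProduct] using this
  · have := congrFun hsum (Fin.last n)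
    rw [Fin.sum_univ_castSucc] at this
    simp only [hg, hC, Fin.snoc_castSucc, Fin.snoc_last, Finset.sum_apply, Pi.add_apply,
      Pi.smul_apply, smul_eq_mul] at this
    have hμ := hlam' (Fin.last m)
    have hdb : (fun i => lam' i.castSucc) ⬝ᵥ b = ∑ i : Fin m, lam' i.castSucc * b i := rfl
    rw [hdb]
    have hsum2 : ∑ i : Fin m, lam' i.castSucc * (-(b i)) = - ∑ i : Fin m, lam' i.castSucc * b i := by
      rw [← Finset.sum_neg_distrib]; congr 1; funext i; ring
    rw [hsum2] at this
    nlinarith
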